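/- Fix \alpha \in (0,1], \nu > 0, \xi_0 > 0 and u \in [0,1). Then the generating function of the rescaled PDTP inter-arrival distribution converges to the Laplace transform of the Prabhakar density under the well-scaled limit: \lim_{h \to 0^+} \bar\theta_{\alpha}^{(\nu)}(e^{-sh}; \xi_0 h^{\alpha}) = \xi_0^{\nu}/(\xi_0 + s^{\alpha})^{\nu} for every s > 0, where \bar\theta_{\alpha}^{(\nu)}(u;\xi) = u\, \xi^{\nu}/(\xi + (1-u)^{\alpha})^{\nu}. -/

import Mathlib

open Real Filter Topology

/-- PGF of the PDTP inter-arrival time: θ̄(u;ξ) = u ξ^ν/(ξ+(1-u)^α)^ν. -/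
noncomputable def thetaBar (α ν ξ u : ℝ) : ℝ := u * (ξ ^ ν / (ξ + (1 - u) ^ α) ^ ν)

/-- the well-scaled limit
lim_{h→0⁺} θ̄_α^{(ν)}(e^{-sh}; ξ₀ hᵅ) = ξ₀^ν/(ξ₀+sᵅ)^ν for every s > 0. -/
theorem pdtp_pgf_well_scaled_limit (α ν ξ₀ : ℝ) (hα : 0 < α) (hα1 : α ≤ 1)
    (hν : 0 < ν) (hξ₀ : 0 < ξ₀) (s : ℝ) (hs : 0 < s) :
    Tendsto (fun h : ℝ => thetaBar α ν (ξ₀ * h ^ α) (Real.exp (-s * h)))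
      (nhdsWithin 0 (Set.Ioi 0)) (nhds (ξ₀ ^ ν / (ξ₀ + s ^ α) ^ ν)) := by
  -- the auxiliary function g h = (1 - exp(-s h))/h tends to s
  set g : ℝ → ℝ := fun h => (1 - Real.exp (-s * h)) / h with hg_def
  have hderiv : HasDerivAt (fun h : ℝ => 1 - Real.exp (-s * h)) s 0 := by
    have h1 : HasDerivAt (fun h : ℝ => -s * h) (-s) 0 := by
      simpa using (hasDerivAt_id (0:ℝ)).const_mul (-s)
    have h2 : HasDerivAt (fun h : ℝ => Real.exp (-s * h)) (-s) 0 := by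
      have := (Real.hasDerivAt_exp (-s * 0)).comp 0 h1
      simp only [neg_mul, mul_zero, neg_zero, Real.exp_zero, one_mul] at this
      exact this
    simpa using h2.const_sub 1
  have hg : Tendsto g (nhdsWithin 0 (Set.Ioi 0)) (nhds s) := by
    have := hasDerivAt_iff_tendsto_slope.mp hderiv
    have h2 : Tendsto (slope (fun h : ℝ => 1 - Real.exp (-s * h)) 0)
        (nhdsWithin 0 (Set.Ioi 0)) (nhds s) :=
      this.mono_left (nhdsWithin_mono _ (fun x hx => ne_of_gt hx))
    refine h2.congr (fun h => ?_)
    simp [slope, g, div_eq_inv_mul]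
  have hga : Tendsto (fun h => g h ^ α) (nhdsWithin 0 (Set.Ioi 0)) (nhds (s ^ α)) :=
    hg.rpow_const (Or.inr hα.le)
  have hden : Tendsto (fun h => (ξ₀ + g h ^ α) ^ ν) (nhdsWithin 0 (Set.Ioi 0))
      (nhds ((ξ₀ + s ^ α) ^ ν)) :=
    (tendsto_const_nhds.add hga).rpow_const (Or.inr hν.le)
  have hne : ((ξ₀ + s ^ α) ^ ν) ≠ 0 :=
    (Real.rpow_pos_of_pos (by positivity) ν).ne'
  have hexp : Tendsto (fun h : ℝ => Real.exp (-s * h)) (nhdsWithin 0 (Set.Ioi 0)) (nhds 1) := by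
    have : Continuous (fun h : ℝ => Real.exp (-s * h)) := by continuity
    have h2 := (this.tendsto 0).mono_left (nhdsWithin_le_nhds (s := Set.Ioi 0))
    simpa using h2
  have hmain : Tendsto (fun h : ℝ => Real.exp (-s * h) * (ξ₀ ^ ν / (ξ₀ + g h ^ α) ^ ν))
      (nhdsWithin 0 (Set.Ioi 0)) (nhds (ξ₀ ^ ν / (ξ₀ + s ^ α) ^ ν)) := by
    have := hexp.mul ((tendsto_const_nhds (x := ξ₀ ^ ν)).div hden hne)
    simpa using this
  refine hmain.congr' ?_
  filter_upwards [self_mem_nhdsWithin] with h hh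
  have hh : (0:ℝ) < h := hh
  have hu : Real.exp (-s * h) < 1 := by
    rw [Real.exp_lt_one_iff]
    nlinarith
  have h1u : (0:ℝ) < 1 - Real.exp (-s * h) := by linarith
  have key : (1 - Real.exp (-s * h)) ^ α = g h ^ α * h ^ α := by
    rw [← Real.mul_rpow (by positivity) hh.le]
    congr 1
    show 1 - Real.exp (-s * h) = (1 - Real.exp (-s * h)) / h * h
    exact (div_mul_cancel₀ _ hh.ne').symm
  show Real.exp (-s * h) * (ξ₀ ^ ν / (ξ₀ + g h ^ α) ^ ν) = thetaBar α ν (ξ₀ * h ^ α) (Real.exp (-s * h))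
  unfold thetaBar
  rw [key]
  have hnum : (ξ₀ * h ^ α) ^ ν = ξ₀ ^ ν * (h ^ α) ^ ν :=
    Real.mul_rpow hξ₀.le (by positivity)
  have hden2 : (ξ₀ * h ^ α + g h ^ α * h ^ α) ^ ν = (ξ₀ + g h ^ α) ^ ν * (h ^ α) ^ ν := by
    rw [← add_mul, Real.mul_rpow (by positivity) (by positivity)]
  rw [hnum, hden2, mul_div_mul_right _ _ (by positivity : ((h:ℝ) ^ α) ^ ν ≠ 0)]
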